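/- arXiv:1305.4746 — 2 statements merged into one kernel-verified Lean document; each statement's English description precedes it below -/
import Mathlib

section
/- Let X and Y be random variables taking values in finite sets, and let Z(X|Y) = 2 * Σ_y p_Y(y) * sqrt(p_{X|Y}(0|y) * p_{X|Y}(1|y)) be the Bhattacharyya parameter for a binary X. If (X₁,Y₁) and (X₂,Y₂) are two independent copies of (X,Y), then Z(X₁ ⊕ X₂ | Y₁,Y₂) ≥ sqrt(2·Z(X|Y)² − Z(X|Y)⁴). -/
open Finset

noncomputable def distOf {Ω α : Type*} [Fintype Ω] [DecidableEq α] (μ : Ω → ℝ) (f : Ω → α) : α → ℝ :=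
  fun x => ∑ ω, if f ω = x then μ ω else 0

noncomputable def ent {α : Type*} [Fintype α] (p : α → ℝ) : ℝ :=
  -∑ a, p a * Real.logb 2 (p a)

noncomputable def Hrv {Ω α : Type*} [Fintype Ω] [Fintype α] [DecidableEq α]
    (μ : Ω → ℝ) (f : Ω → α) : ℝ :=
  ent (distOf μ f)

noncomputable def MIrv {Ω α β : Type*} [Fintype Ω] [Fintype α] [Fintype β]
    [DecidableEq α] [DecidableEq β] (μ : Ω → ℝ) (f : Ω → α) (g : Ω → β) : ℝ :=
  Hrv μ f + Hrv μ g - Hrv μ (fun ω => (f ω, g ω))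

noncomputable def condH {Ω α β : Type*} [Fintype Ω] [Fintype α] [Fintype β]
    [DecidableEq α] [DecidableEq β] (μ : Ω → ℝ) (f : Ω → α) (g : Ω → β) : ℝ :=
  Hrv μ (fun ω => (f ω, g ω)) - Hrv μ g

noncomputable def cMI {Ω α β γ : Type*} [Fintype Ω] [Fintype α] [Fintype β] [Fintype γ]
    [DecidableEq α] [DecidableEq β] [DecidableEq γ]
    (μ : Ω → ℝ) (f : Ω → α) (g : Ω → β) (h : Ω → γ) : ℝ :=
  Hrv μ (fun ω => (f ω, h ω)) + Hrv μ (fun ω => (g ω, h ω))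
    - Hrv μ (fun ω => (f ω, g ω, h ω)) - Hrv μ h

def IsPMF {Ω : Type*} [Fintype Ω] (μ : Ω → ℝ) : Prop := (∀ ω, 0 ≤ μ ω) ∧ ∑ ω, μ ω = 1

noncomputable def TV {α : Type*} [Fintype α] (p q : α → ℝ) : ℝ := (1/2) * ∑ a, |p a - q a|

noncomputable def Zbh {Y : Type*} [Fintype Y] (p : ZMod 2 × Y → ℝ) : ℝ :=
  2 * ∑ y, (∑ x, p (x, y)) *
    Real.sqrt ((p (0, y) / ∑ x, p (x, y)) * (p (1, y) / ∑ x, p (x, y)))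

section Aux

lemma sum_zmod2 (f : ZMod 2 → ℝ) : ∑ x : ZMod 2, f x = f 0 + f 1 := by
  have : (Finset.univ : Finset (ZMod 2)) = {0, 1} := rfl
  rw [this, Finset.sum_insert (by decide), Finset.sum_singleton]

lemma sqrt_sq_add_sq_sum {ι : Type*} (s : Finset ι) (f g : ι → ℝ) :
    Real.sqrt ((∑ i ∈ s, f i)^2 + (∑ i ∈ s, g i)^2)
      ≤ ∑ i ∈ s, Real.sqrt (f i ^2 + g i ^2) := by
  have key : ∀ x y : ℝ, Real.sqrt (x^2 + y^2) = ‖(⟨x, y⟩ : ℂ)‖ := by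
    intro x y
    rw [Complex.norm_def, Complex.normSq_mk]
    ring_nf
  have hs : (∑ i ∈ s, (⟨f i, g i⟩ : ℂ)) = ⟨∑ i ∈ s, f i, ∑ i ∈ s, g i⟩ := by
    apply Complex.ext <;> simp [Complex.re_sum, Complex.im_sum]
  calc Real.sqrt ((∑ i ∈ s, f i)^2 + (∑ i ∈ s, g i)^2)
      = ‖∑ i ∈ s, (⟨f i, g i⟩ : ℂ)‖ := by rw [key, hs]
    _ ≤ ∑ i ∈ s, ‖(⟨f i, g i⟩ : ℂ)‖ := norm_sum_le _ _
    _ = ∑ i ∈ s, Real.sqrt (f i ^2 + g i ^2) := by simp [key]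

lemma bhat_point (a b : ℝ) (ha : 0 ≤ a) (hb : 0 ≤ b) :
    2 * ((a + b) * Real.sqrt (a / (a + b) * (b / (a + b)))) = Real.sqrt (4 * (a * b)) := by
  rcases eq_or_lt_of_le (add_nonneg ha hb) with h | h
  · have ha0 : a = 0 := by linarith
    have hb0 : b = 0 := by linarith
    simp [ha0, hb0]
  · have hne : a + b ≠ 0 := ne_of_gt h
    have e : a / (a + b) * (b / (a + b)) = (a * b) / (a + b)^2 := by
      rw [div_mul_div_comm, ← sq]
    have h4 : Real.sqrt (4 * (a * b)) = 2 * (Real.sqrt a * Real.sqrt b) := by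
      rw [show (4:ℝ) * (a * b) = (2 * (Real.sqrt a * Real.sqrt b))^2 by
        rw [mul_pow, mul_pow, Real.sq_sqrt ha, Real.sq_sqrt hb]; ring]
      exact Real.sqrt_sq (by positivity)
    rw [e, Real.sqrt_div (mul_nonneg ha hb), Real.sqrt_sq (le_of_lt h), h4]
    field_simp
    exact Real.sqrt_mul ha b

end Aux

noncomputable def AA {Y : Type*} (p : ZMod 2 × Y → ℝ) (y : Y) : ℝ := 4 * (p (0, y) * p (1, y))
noncomputable def sA {Y : Type*} (p : ZMod 2 × Y → ℝ) (y : Y) : ℝ := p (0, y) + p (1, y)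

lemma Zbh_eq {Y : Type*} [Fintype Y] (p : ZMod 2 × Y → ℝ) (hp : ∀ z, 0 ≤ p z) :
    Zbh p = ∑ y, Real.sqrt (AA p y) := by
  unfold Zbh
  rw [Finset.mul_sum]
  apply Finset.sum_congr rfl
  intro y _
  rw [sum_zmod2 (fun x => p (x, y))]
  exact bhat_point _ _ (hp _) (hp _)


/-- Bhattacharyya parameter bound for the `minus` polar transform:
if `(X₁,Y₁)` and `(X₂,Y₂)` are independent copies of `(X,Y)` then
`Z(X₁ ⊕ X₂ | Y₁ Y₂) ≥ √(2 Z(X|Y)² − Z(X|Y)⁴)`. -/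
theorem bhattacharyya_minus_transform {Y : Type*} [Fintype Y]
    (p : ZMod 2 × Y → ℝ) (hp0 : ∀ z, 0 ≤ p z) (hp1 : ∑ z, p z = 1) :
    Real.sqrt (2 * Zbh p ^ 2 - Zbh p ^ 4)
      ≤ Zbh (fun z : ZMod 2 × (Y × Y) =>
          ∑ x : ZMod 2, p (x, z.2.1) * p (z.1 + x, z.2.2)) := by
  set q := (fun z : ZMod 2 × (Y × Y) => ∑ x : ZMod 2, p (x, z.2.1) * p (z.1 + x, z.2.2))
    with hqdef
  have hq0 : ∀ z, 0 ≤ q z := by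
    intro z; rw [hqdef]
    exact Finset.sum_nonneg fun x _ => mul_nonneg (hp0 _) (hp0 _)
  have hs0 : ∀ y, 0 ≤ sA p y := fun y => add_nonneg (hp0 _) (hp0 _)
  have hA0 : ∀ y, 0 ≤ AA p y := fun y => by
    simp only [AA]; have h1 := hp0 (0, y); have h2 := hp0 (1, y); positivity
  have hAs : ∀ y, AA p y ≤ sA p y ^ 2 := fun y => by
    simp only [AA, sA]; nlinarith [sq_nonneg (p (0, y) - p (1, y))]
  have hsum1 : ∑ y, sA p y = 1 := by
    rw [← hp1, Fintype.sum_prod_type, sum_zmod2 (fun x => ∑ y, p (x, y)),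
      ← Finset.sum_add_distrib]
    exact Finset.sum_congr rfl fun y _ => rfl
  have hZ : ∑ y, Real.sqrt (AA p y) = Zbh p := (Zbh_eq p hp0).symm
  have hZ0 : 0 ≤ Zbh p := by
    rw [← hZ]; exact Finset.sum_nonneg fun y _ => Real.sqrt_nonneg _
  have hZ1 : Zbh p ≤ 1 := by
    rw [← hZ, ← hsum1]
    apply Finset.sum_le_sum
    intro y _
    calc Real.sqrt (AA p y) ≤ Real.sqrt (sA p y ^ 2) := Real.sqrt_le_sqrt (hAs y)
      _ = sA p y := Real.sqrt_sq (hs0 y)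
  have h1mZ : 0 ≤ 1 - Zbh p ^ 2 := by nlinarith
  have e0 : ∀ z : Y × Y, q (0, z) = p (0, z.1) * p (0, z.2) + p (1, z.1) * p (1, z.2) := by
    intro z
    have h : q (0, z) = ∑ x : ZMod 2, p (x, z.1) * p ((0 : ZMod 2) + x, z.2) := by rw [hqdef]
    rw [h, sum_zmod2 (fun x => p (x, z.1) * p ((0 : ZMod 2) + x, z.2))]
    simp
  have e1 : ∀ z : Y × Y, q (1, z) = p (0, z.1) * p (1, z.2) + p (1, z.1) * p (0, z.2) := by
    intro z
    have h : q (1, z) = ∑ x : ZMod 2, p (x, z.1) * p ((1 : ZMod 2) + x, z.2) := by rw [hqdef]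
    rw [h, sum_zmod2 (fun x => p (x, z.1) * p ((1 : ZMod 2) + x, z.2)),
      show (1 : ZMod 2) + 0 = 1 by decide, show (1 : ZMod 2) + 1 = 0 by decide]
  have hq01 : ∀ z : Y × Y,
      AA q z = AA p z.1 * sA p z.2 ^ 2 + (sA p z.1 ^ 2 - AA p z.1) * AA p z.2 := by
    intro z
    simp only [AA, sA]
    rw [show q (0, z) * q (1, z) = (p (0, z.1) * p (0, z.2) + p (1, z.1) * p (1, z.2)) *
      (p (0, z.1) * p (1, z.2) + p (1, z.1) * p (0, z.2)) by rw [e0 z, e1 z]]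
    ring
  have hZq : Zbh q = ∑ y1, ∑ y2,
      Real.sqrt (AA p y1 * sA p y2 ^ 2 + (sA p y1 ^ 2 - AA p y1) * AA p y2) := by
    rw [Zbh_eq q hq0]
    rw [Fintype.sum_prod_type]
    apply Finset.sum_congr rfl; intro y1 _
    apply Finset.sum_congr rfl; intro y2 _
    rw [hq01 (y1, y2)]
  rw [hZq]
  have step1 : ∀ y1, Real.sqrt (AA p y1 + (sA p y1 ^ 2 - AA p y1) * Zbh p ^ 2)
      ≤ ∑ y2, Real.sqrt (AA p y1 * sA p y2 ^ 2 + (sA p y1 ^ 2 - AA p y1) * AA p y2) := by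
    intro y1
    have hd : 0 ≤ sA p y1 ^ 2 - AA p y1 := by linarith [hAs y1]
    calc Real.sqrt (AA p y1 + (sA p y1 ^ 2 - AA p y1) * Zbh p ^ 2)
        = Real.sqrt ((∑ y2, Real.sqrt (AA p y1) * sA p y2) ^ 2
            + (∑ y2, Real.sqrt (sA p y1 ^ 2 - AA p y1) * Real.sqrt (AA p y2)) ^ 2) := by
          rw [← Finset.mul_sum, ← Finset.mul_sum, hsum1, mul_one, hZ, mul_pow,
            Real.sq_sqrt (hA0 y1), Real.sq_sqrt hd]
      _ ≤ ∑ y2, Real.sqrt ((Real.sqrt (AA p y1) * sA p y2) ^ 2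
            + (Real.sqrt (sA p y1 ^ 2 - AA p y1) * Real.sqrt (AA p y2)) ^ 2) :=
          sqrt_sq_add_sq_sum _ _ _
      _ = ∑ y2, Real.sqrt (AA p y1 * sA p y2 ^ 2 + (sA p y1 ^ 2 - AA p y1) * AA p y2) := by
          apply Finset.sum_congr rfl; intro y2 _
          rw [mul_pow, mul_pow, Real.sq_sqrt (hA0 y1), Real.sq_sqrt hd, Real.sq_sqrt (hA0 y2)]
  calc Real.sqrt (2 * Zbh p ^ 2 - Zbh p ^ 4)
      = Real.sqrt ((∑ y, Real.sqrt (AA p y) * Real.sqrt (1 - Zbh p ^ 2)) ^ 2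
          + (∑ y, sA p y * Zbh p) ^ 2) := by
        rw [← Finset.sum_mul, ← Finset.sum_mul, hZ, hsum1, one_mul, mul_pow,
          Real.sq_sqrt h1mZ]
        congr 1
        ring
    _ ≤ ∑ y, Real.sqrt ((Real.sqrt (AA p y) * Real.sqrt (1 - Zbh p ^ 2)) ^ 2
          + (sA p y * Zbh p) ^ 2) := sqrt_sq_add_sq_sum _ _ _
    _ = ∑ y, Real.sqrt (AA p y + (sA p y ^ 2 - AA p y) * Zbh p ^ 2) := by
        apply Finset.sum_congr rfl; intro y _
        rw [mul_pow, mul_pow, Real.sq_sqrt (hA0 y), Real.sq_sqrt h1mZ]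
        congr 1
        ring
    _ ≤ ∑ y1, ∑ y2, Real.sqrt (AA p y1 * sA p y2 ^ 2 + (sA p y1 ^ 2 - AA p y1) * AA p y2) :=
        Finset.sum_le_sum fun y1 _ => step1 y1
end

section
/- Let K, K̃, F, F′, Z be discrete random variables and K̃₀ a uniformly distributed random bit-string of the same length as F′, with K̃₀ independent of (K, K̃, F, F′, Z). If I(K, K̃; F, Z) ≤ ε₁ and (length of K̃₀) − H(K̃₀) ≤ ε₂, then I(K, K̃; F, F′ ⊕ K̃₀, Z) ≤ ε₁ + ε₂, where ⊕ is bitwise XOR. -/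
open Finset

set_option synthInstance.maxSize 1000

section Aux

variable {Ω : Type*} [Fintype Ω]

lemma distOf_nonneg' {α : Type*} [DecidableEq α] {μ : Ω → ℝ} (hμ : ∀ ω, 0 ≤ μ ω)
    (f : Ω → α) (x : α) : 0 ≤ distOf μ f x := by
  apply Finset.sum_nonneg
  intro ω _
  split
  · exact hμ ω
  · exact le_rfl

lemma distOf_sum' {α : Type*} [Fintype α] [DecidableEq α] (μ : Ω → ℝ) (f : Ω → α) :
    ∑ x, distOf μ f x = ∑ ω, μ ω := by
  unfold distOf
  rw [Finset.sum_comm]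
  simp

lemma sum_dist' {α : Type*} [Fintype α] [DecidableEq α] (μ : Ω → ℝ) (f : Ω → α)
    (c : α → Prop) [DecidablePred c] :
    (∑ ω, if c (f ω) then μ ω else 0) = ∑ x, if c x then distOf μ f x else 0 := by
  unfold distOf
  have h : ∀ x, (if c x then ∑ ω, if f ω = x then μ ω else 0 else 0)
      = ∑ ω, if f ω = x then (if c x then μ ω else 0) else 0 := by
    intro x
    split <;> simp
  simp only [h]
  rw [Finset.sum_comm]
  congr 1
  funext ω
  rw [Finset.sum_ite_eq]
  simp

lemma Hrv_equiv' {α β : Type*} [Fintype α] [Fintype β] [DecidableEq α] [DecidableEq β]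
    (μ : Ω → ℝ) (f : Ω → α) (e : α ≃ β) :
    Hrv μ (fun ω => e (f ω)) = Hrv μ f := by
  have hd : ∀ b, distOf μ (fun ω => e (f ω)) b = distOf μ f (e.symm b) := by
    intro b
    unfold distOf
    congr 1
    funext ω
    refine if_congr ?_ rfl rfl
    exact e.apply_eq_iff_eq_symm_apply
  unfold Hrv ent
  simp only [hd]
  rw [Equiv.sum_comp e.symm (fun a => distOf μ f a * Real.logb 2 (distOf μ f a))]

lemma ent_unif_prod' {α : Type*} [Fintype α] (d : ℕ) (q : α → ℝ)
    (hq : ∀ a, 0 ≤ q a) (hs : ∑ a, q a = 1)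
    (p : (Fin d → ZMod 2) × α → ℝ) (hp : ∀ w a, p (w, a) = (1 / 2 ^ d) * q a) :
    ent p = d + ent q := by
  unfold ent
  rw [Fintype.sum_prod_type]
  simp only [hp]
  rw [Finset.sum_const, Finset.card_univ]
  have hcard : Fintype.card (Fin d → ZMod 2) = 2 ^ d := by
    simp [Fintype.card_fun]
  rw [hcard, nsmul_eq_mul]
  push_cast
  rw [Finset.mul_sum]
  have key : ∀ a, (2:ℝ)^d * ((1/2^d) * q a * Real.logb 2 ((1/2^d) * q a))
      = q a * Real.logb 2 (q a) - d * q a := by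
    intro a
    rcases eq_or_lt_of_le (hq a) with h | h
    · simp [← h]
    · have hlog : Real.logb 2 ((1/2^d : ℝ) * q a) = Real.logb 2 (q a) - d := by
        rw [Real.logb_mul (by positivity) (ne_of_gt h), one_div, Real.logb_inv,
          Real.logb_pow]
        simp [Real.logb_self_eq_one]
        ring
      rw [hlog]
      have h2d : (2:ℝ)^d ≠ 0 := by positivity
      field_simp
  simp only [key]
  rw [Finset.sum_sub_distrib, ← Finset.mul_sum, hs]
  ring

lemma ind_push' {κ κ' φ ζ α : Type*} [Fintype κ] [Fintype κ'] [Fintype φ] [Fintype ζ]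
    [Fintype α] [DecidableEq κ] [DecidableEq κ'] [DecidableEq φ] [DecidableEq ζ]
    [DecidableEq α]
    (d : ℕ) (μ : Ω → ℝ)
    (K : Ω → κ) (K' : Ω → κ') (F : Ω → φ) (F' : Ω → Fin d → ZMod 2) (Z : Ω → ζ)
    (K0 : Ω → Fin d → ZMod 2)
    (hunif : ∀ x, distOf μ K0 x = 1 / 2 ^ d)
    (hind : ∀ x y, distOf μ (fun ω => (K0 ω, (K ω, K' ω, F ω, F' ω, Z ω))) (x, y)
      = distOf μ K0 x * distOf μ (fun ω => (K ω, K' ω, F ω, F' ω, Z ω)) y)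
    (g : κ × κ' × φ × (Fin d → ZMod 2) × ζ → α) (w : Fin d → ZMod 2) (a : α) :
    distOf μ (fun ω => ((fun i => F' ω i + K0 ω i), g (K ω, K' ω, F ω, F' ω, Z ω))) (w, a)
      = (1 / 2 ^ d) * distOf μ (fun ω => g (K ω, K' ω, F ω, F' ω, Z ω)) a := by
  classical
  have hsum := sum_dist' μ (fun ω => (K0 ω, (K ω, K' ω, F ω, F' ω, Z ω)))
      (fun p : (Fin d → ZMod 2) × (κ × κ' × φ × (Fin d → ZMod 2) × ζ) =>
        (p.1 = fun i => w i - p.2.2.2.2.1 i) ∧ g p.2 = a)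
  dsimp only at hsum
  have step0 : distOf μ
        (fun ω => ((fun i => F' ω i + K0 ω i), g (K ω, K' ω, F ω, F' ω, Z ω))) (w, a)
      = ∑ ω, if (K0 ω = fun i => w i - F' ω i) ∧ g (K ω, K' ω, F ω, F' ω, Z ω) = a
          then μ ω else 0 := by
    unfold distOf
    congr 1
    funext ω
    refine if_congr ?_ rfl rfl
    rw [Prod.mk.injEq]
    constructor
    · rintro ⟨h1', h2'⟩
      refine ⟨?_, h2'⟩
      funext i
      have h3 := congrFun h1' i
      rw [eq_sub_iff_add_eq]
      linear_combination h3
    · rintro ⟨h1', h2'⟩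
      refine ⟨?_, h2'⟩
      funext i
      have h3 := congrFun h1' i
      rw [eq_sub_iff_add_eq] at h3
      linear_combination h3
  rw [step0, hsum, Fintype.sum_prod_type]
  simp only [hind, hunif, ite_and]
  rw [Finset.sum_comm]
  simp only [Finset.sum_ite_eq', Finset.mem_univ, if_true]
  have hfin := sum_dist' μ (fun ω => (K ω, K' ω, F ω, F' ω, Z ω)) (fun v => g v = a)
  calc (∑ v : κ × κ' × φ × (Fin d → ZMod 2) × ζ,
          if g v = a then (1/2^d : ℝ) * distOf μ (fun ω => (K ω, K' ω, F ω, F' ω, Z ω)) v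
          else 0)
      = (1/2^d : ℝ) * ∑ v : κ × κ' × φ × (Fin d → ZMod 2) × ζ,
          (if g v = a then distOf μ (fun ω => (K ω, K' ω, F ω, F' ω, Z ω)) v else 0) := by
        rw [Finset.mul_sum]
        congr 1
        funext v
        split <;> simp
    _ = (1/2^d : ℝ) * distOf μ (fun ω => g (K ω, K' ω, F ω, F' ω, Z ω)) a := by
        rw [← hfin]
        rfl

end Aux

/-- one-time-pad step: if `K̃₀` is a uniform bit-string of length `d`,
independent of `(K, K̃, F, F′, Z)`, `I(K, K̃; F, Z) ≤ ε₁` and `d − H(K̃₀) ≤ ε₂`, then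
`I(K, K̃; F, F′ ⊕ K̃₀, Z) ≤ ε₁ + ε₂`. -/
theorem one_time_pad_leakage_bound {Ω κ κ' φ ζ : Type*} [Fintype Ω]
    [Fintype κ] [Fintype κ'] [Fintype φ] [Fintype ζ]
    [DecidableEq κ] [DecidableEq κ'] [DecidableEq φ] [DecidableEq ζ]
    (d : ℕ) (μ : Ω → ℝ) (hμ : IsPMF μ)
    (K : Ω → κ) (K' : Ω → κ') (F : Ω → φ) (F' : Ω → Fin d → ZMod 2) (Z : Ω → ζ)
    (K0 : Ω → Fin d → ZMod 2)
    (hunif : ∀ x, distOf μ K0 x = 1 / 2 ^ d)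
    (hind : ∀ x y, distOf μ (fun ω => (K0 ω, (K ω, K' ω, F ω, F' ω, Z ω))) (x, y)
      = distOf μ K0 x * distOf μ (fun ω => (K ω, K' ω, F ω, F' ω, Z ω)) y)
    (ε₁ ε₂ : ℝ) (hε₁ : 0 ≤ ε₁) (hε₂ : 0 ≤ ε₂)
    (h1 : MIrv μ (fun ω => (K ω, K' ω)) (fun ω => (F ω, Z ω)) ≤ ε₁)
    (h2 : (d : ℝ) - Hrv μ K0 ≤ ε₂) :
    MIrv μ (fun ω => (K ω, K' ω))
           (fun ω => (F ω, (fun i => F' ω i + K0 ω i), Z ω)) ≤ ε₁ + ε₂ := by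
  classical
  obtain ⟨hμ0, hμ1⟩ := hμ
  -- E1 : H(F, W, Z) = d + H(F, Z)
  have hW1 : ∀ (w : Fin d → ZMod 2) (a : φ × ζ),
      distOf μ (fun ω => ((fun i => F' ω i + K0 ω i), (F ω, Z ω))) (w, a)
        = (1 / 2 ^ d) * distOf μ (fun ω => (F ω, Z ω)) a := by
    intro w a
    exact ind_push' d μ K K' F F' Z K0 hunif hind
      (fun v => (v.2.2.1, v.2.2.2.2)) w a
  have E1' : Hrv μ (fun ω => ((fun i => F' ω i + K0 ω i), (F ω, Z ω)))
      = d + Hrv μ (fun ω => (F ω, Z ω)) := by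
    unfold Hrv
    exact ent_unif_prod' d _ (fun a => distOf_nonneg' hμ0 _ a)
      (by rw [distOf_sum']; exact hμ1) _ (fun w a => hW1 w a)
  have E1 : Hrv μ (fun ω => (F ω, (fun i => F' ω i + K0 ω i), Z ω))
      = d + Hrv μ (fun ω => (F ω, Z ω)) := by
    have h := Hrv_equiv' μ (fun ω => (F ω, (fun i => F' ω i + K0 ω i), Z ω))
      (⟨fun p => (p.2.1, (p.1, p.2.2)), fun p => (p.2.1, p.1, p.2.2),
        fun p => rfl, fun p => rfl⟩ :
        (φ × (Fin d → ZMod 2) × ζ) ≃ ((Fin d → ZMod 2) × (φ × ζ)))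
    simp only [Equiv.coe_fn_mk] at h
    rw [← h, E1']
  -- E2 : H((K,K'), (F, W, Z)) = d + H((K,K'), (F, Z))
  have hW2 : ∀ (w : Fin d → ZMod 2) (a : (κ × κ') × (φ × ζ)),
      distOf μ (fun ω => ((fun i => F' ω i + K0 ω i), ((K ω, K' ω), (F ω, Z ω)))) (w, a)
        = (1 / 2 ^ d) * distOf μ (fun ω => ((K ω, K' ω), (F ω, Z ω))) a := by
    intro w a
    exact ind_push' d μ K K' F F' Z K0 hunif hind
      (fun v => ((v.1, v.2.1), (v.2.2.1, v.2.2.2.2))) w a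
  have E2' : Hrv μ (fun ω => ((fun i => F' ω i + K0 ω i), ((K ω, K' ω), (F ω, Z ω))))
      = d + Hrv μ (fun ω => ((K ω, K' ω), (F ω, Z ω))) := by
    unfold Hrv
    exact ent_unif_prod' d _ (fun a => distOf_nonneg' hμ0 _ a)
      (by rw [distOf_sum']; exact hμ1) _ (fun w a => hW2 w a)
  have E2 : Hrv μ (fun ω => ((K ω, K' ω), (F ω, (fun i => F' ω i + K0 ω i), Z ω)))
      = d + Hrv μ (fun ω => ((K ω, K' ω), (F ω, Z ω))) := by
    have h := Hrv_equiv' μ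
      (fun ω => ((K ω, K' ω), (F ω, (fun i => F' ω i + K0 ω i), Z ω)))
      (⟨fun p => (p.2.2.1, (p.1, (p.2.1, p.2.2.2))),
        fun p => (p.2.1, (p.2.2.1, p.1, p.2.2.2)),
        fun p => rfl, fun p => rfl⟩ :
        ((κ × κ') × (φ × (Fin d → ZMod 2) × ζ))
          ≃ ((Fin d → ZMod 2) × ((κ × κ') × (φ × ζ))))
    simp only [Equiv.coe_fn_mk] at h
    rw [← h, E2']
  unfold MIrv at h1 ⊢
  rw [E1, E2]
  linarith
end
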